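/- For coprime integer pairs (p,q) and (r,s) with |ps − qr| = 1, any coprime pair (a,b) satisfying |as − br| ≤ 1 and |aq − bp| ≤ 1 must satisfy (a,b) = ±(p,q), ±(r,s), or ±(p+r, q+s) or ±(p−r, q−s). -/
import Mathlib


lemma farey_aux (a b : ℤ) (hab : IsCoprime a b) : a ≠ 0 ∨ b ≠ 0 := by
  by_contra h
  push_neg at h
  obtain ⟨h1, h2⟩ := h
  subst h1; subst h2
  exact not_isCoprime_zero_zero hab

set_option maxHeartbeats 1000000 in
/-- For coprime integer pairs `(p,q)` and `(r,s)` with `|ps − qr| = 1`, any coprime pair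
`(a,b)` with `|as − br| ≤ 1` and `|aq − bp| ≤ 1` equals `±(p,q)`, `±(r,s)`, `±(p+r,q+s)`
or `±(p−r,q−s)`. -/
theorem farey_neighbors (p q r s a b : ℤ)
    (hpq : IsCoprime p q) (hrs : IsCoprime r s) (hab : IsCoprime a b)
    (h1 : |p * s - q * r| = 1)
    (h2 : |a * s - b * r| ≤ 1) (h3 : |a * q - b * p| ≤ 1) :
    ((a, b) = (p, q) ∨ (a, b) = (-p, -q)) ∨
    ((a, b) = (r, s) ∨ (a, b) = (-r, -s)) ∨
    ((a, b) = (p + r, q + s) ∨ (a, b) = (-(p + r), -(q + s))) ∨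
    ((a, b) = (p - r, q - s) ∨ (a, b) = (-(p - r), -(q - s))) := by
  rw [abs_le] at h2 h3
  have hab0 : a ≠ 0 ∨ b ≠ 0 := farey_aux a b hab
  have ha : a * (p * s - q * r) = (a * s - b * r) * p - (a * q - b * p) * r := by ring
  have hb : b * (p * s - q * r) = (a * s - b * r) * q - (a * q - b * p) * s := by ring
  have hd : p * s - q * r = 1 ∨ p * s - q * r = -1 :=
    (abs_eq (by norm_num : (0:ℤ) ≤ 1)).mp h1
  have hz : ¬(a * s - b * r = 0 ∧ a * q - b * p = 0) := by
    rintro ⟨hm0, hn0⟩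
    rcases hd with hd | hd <;> rw [hm0, hn0, hd] at ha hb <;> omega
  have hm : a * s - b * r = -1 ∨ a * s - b * r = 0 ∨ a * s - b * r = 1 := by omega
  have hn : a * q - b * p = -1 ∨ a * q - b * p = 0 ∨ a * q - b * p = 1 := by omega
  clear h1 h2 h3 hpq hrs hab hab0
  rcases hd with hd | hd
  · rcases hm with hm | hm | hm
    · rcases hn with hn | hn | hn
      · rw [hm, hn, hd] at ha hb
        refine Or.inr (Or.inr (Or.inr (Or.inr ?_)))
        simp only [Prod.mk.injEq]
        constructor <;> linarith
      · rw [hm, hn, hd] at ha hb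
        refine Or.inl (Or.inr ?_)
        simp only [Prod.mk.injEq]
        constructor <;> linarith
      · rw [hm, hn, hd] at ha hb
        refine Or.inr (Or.inr (Or.inl (Or.inr ?_)))
        simp only [Prod.mk.injEq]
        constructor <;> linarith
    · rcases hn with hn | hn | hn
      · rw [hm, hn, hd] at ha hb
        refine Or.inr (Or.inl (Or.inl ?_))
        simp only [Prod.mk.injEq]
        constructor <;> linarith
      · exact absurd (And.intro hm hn) hz
      · rw [hm, hn, hd] at ha hb
        refine Or.inr (Or.inl (Or.inr ?_))
        simp only [Prod.mk.injEq]
        constructor <;> linarith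
    · rcases hn with hn | hn | hn
      · rw [hm, hn, hd] at ha hb
        refine Or.inr (Or.inr (Or.inl (Or.inl ?_)))
        simp only [Prod.mk.injEq]
        constructor <;> linarith
      · rw [hm, hn, hd] at ha hb
        refine Or.inl (Or.inl ?_)
        simp only [Prod.mk.injEq]
        constructor <;> linarith
      · rw [hm, hn, hd] at ha hb
        refine Or.inr (Or.inr (Or.inr (Or.inl ?_)))
        simp only [Prod.mk.injEq]
        constructor <;> linarith
  · rcases hm with hm | hm | hm
    · rcases hn with hn | hn | hn
      · rw [hm, hn, hd] at ha hb
        refine Or.inr (Or.inr (Or.inr (Or.inl ?_)))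
        simp only [Prod.mk.injEq]
        constructor <;> linarith
      · rw [hm, hn, hd] at ha hb
        refine Or.inl (Or.inl ?_)
        simp only [Prod.mk.injEq]
        constructor <;> linarith
      · rw [hm, hn, hd] at ha hb
        refine Or.inr (Or.inr (Or.inl (Or.inl ?_)))
        simp only [Prod.mk.injEq]
        constructor <;> linarith
    · rcases hn with hn | hn | hn
      · rw [hm, hn, hd] at ha hb
        refine Or.inr (Or.inl (Or.inr ?_))
        simp only [Prod.mk.injEq]
        constructor <;> linarith
      · exact absurd (And.intro hm hn) hz
      · rw [hm, hn, hd] at ha hb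
        refine Or.inr (Or.inl (Or.inl ?_))
        simp only [Prod.mk.injEq]
        constructor <;> linarith
    · rcases hn with hn | hn | hn
      · rw [hm, hn, hd] at ha hb
        refine Or.inr (Or.inr (Or.inl (Or.inr ?_)))
        simp only [Prod.mk.injEq]
        constructor <;> linarith
      · rw [hm, hn, hd] at ha hb
        refine Or.inl (Or.inr ?_)
        simp only [Prod.mk.injEq]
        constructor <;> linarith
      · rw [hm, hn, hd] at ha hb
        refine Or.inr (Or.inr (Or.inr (Or.inr ?_)))
        simp only [Prod.mk.injEq]
        constructor <;> linarith
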